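/- For all γ, γ' ∈ ℤ², the discrete functions χ_γ on ℤ² satisfy the product formula χ_γ · conj(χ_{γ'}) = (1/2)(χ_{(γ1−γ1', γ2−γ2')} + (−1)^{γ2'} χ_{(γ1+γ1', γ2−γ2')}), where all functions are evaluated pointwise at (θ,φ) = (i1π/m1, i2π/m2). -/

import Mathlib

open Real Complex

/-- The parity-modified double Fourier basis functions X_γ. -/
noncomputable def Xbasis (γ : ℤ × ℤ) (θ φ : ℝ) : ℂ :=
  if Even γ.2 then
    (Real.cos (γ.1 * θ) : ℂ) * Complex.exp (Complex.I * γ.2 * φ)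
  else
    Complex.I * (Real.sin (γ.1 * θ) : ℂ) * Complex.exp (Complex.I * γ.2 * φ)

theorem stmt11 (γ γ' : ℤ × ℤ) (θ φ : ℝ) :
    Xbasis γ θ φ * (starRingEnd ℂ) (Xbasis γ' θ φ) =
      (1 / 2) * (Xbasis (γ.1 - γ'.1, γ.2 - γ'.2) θ φ +
        (-1 : ℂ) ^ γ'.2 * Xbasis (γ.1 + γ'.1, γ.2 - γ'.2) θ φ) := by
  have hc : ∀ b : ℤ, (starRingEnd ℂ) (Complex.exp (Complex.I * b * φ)) =
      (Complex.exp (Complex.I * b * φ))⁻¹ := by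
    intro b
    rw [← Complex.exp_conj, ← Complex.exp_neg]
    congr 1
    simp
  rcases Int.even_or_odd γ.2 with h2 | h2 <;> rcases Int.even_or_odd γ'.2 with h2' | h2'
  · simp only [Xbasis, if_pos h2, if_pos h2', if_pos (h2.sub h2'), h2'.neg_one_zpow]
    rw [map_mul, Complex.conj_ofReal, hc]
    push_cast
    simp only [sub_mul, add_mul, mul_sub, mul_add, Complex.exp_sub]
    field_simp [Complex.exp_ne_zero]
    simp only [mul_comm (θ : ℂ), sub_mul, add_mul, Complex.cos_sub, Complex.cos_add, Complex.sin_sub,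
      Complex.sin_add]
    ring
  · have hne : ¬ Even (γ.2 - γ'.2) := by
      simp [Int.even_sub, h2, Int.not_even_iff_odd.mpr h2']
    simp only [Xbasis, if_pos h2, if_neg (Int.not_even_iff_odd.mpr h2'), if_neg hne,
      h2'.neg_one_zpow]
    rw [map_mul, map_mul, Complex.conj_ofReal, Complex.conj_I, hc]
    push_cast
    simp only [sub_mul, add_mul, mul_sub, mul_add, Complex.exp_sub]
    field_simp [Complex.exp_ne_zero]
    simp only [mul_comm (θ : ℂ), sub_mul, add_mul, Complex.cos_sub, Complex.cos_add, Complex.sin_sub,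
      Complex.sin_add]
    ring
  · have hne : ¬ Even (γ.2 - γ'.2) := by
      simp [Int.even_sub, Int.not_even_iff_odd.mpr h2, h2']
    simp only [Xbasis, if_neg (Int.not_even_iff_odd.mpr h2), if_pos h2', if_neg hne,
      h2'.neg_one_zpow]
    rw [map_mul, Complex.conj_ofReal, hc]
    push_cast
    simp only [sub_mul, add_mul, mul_sub, mul_add, Complex.exp_sub]
    field_simp [Complex.exp_ne_zero]
    simp only [mul_comm (θ : ℂ), sub_mul, add_mul, Complex.cos_sub, Complex.cos_add, Complex.sin_sub,
      Complex.sin_add]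
    ring
  · have he : Even (γ.2 - γ'.2) := by
      simp [Int.even_sub, Int.not_even_iff_odd.mpr h2, Int.not_even_iff_odd.mpr h2']
    simp only [Xbasis, if_neg (Int.not_even_iff_odd.mpr h2),
      if_neg (Int.not_even_iff_odd.mpr h2'), if_pos he, h2'.neg_one_zpow]
    rw [map_mul, map_mul, Complex.conj_ofReal, Complex.conj_I, hc]
    push_cast
    simp only [sub_mul, add_mul, mul_sub, mul_add, Complex.exp_sub]
    field_simp [Complex.exp_ne_zero]
    simp only [mul_comm (θ : ℂ), sub_mul, add_mul, Complex.cos_sub, Complex.cos_add, Complex.sin_sub,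
      Complex.sin_add]
    ring_nf
    simp only [Complex.I_sq]
    ring
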